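/- The sum over all lines ℓ in 𝔽_q² of (|ℓ ∩ E| − |E|/q)² is at most q·|E|. -/

import Mathlib

open Finset
open scoped Classical

/-- An affine line in `F × F`, given as the finset of solutions of `a*x + b*y = c`
with `(a,b) ≠ (0,0)`. -/
def IsLine {F : Type*} [Field F] [Fintype F] [DecidableEq F] (ℓ : Finset (F × F)) : Prop :=
  ∃ a b c : F, (a, b) ≠ (0, 0) ∧
    ℓ = Finset.univ.filter (fun p : F × F => a * p.1 + b * p.2 = c)

section Aux
variable {F : Type*} [Field F] [Fintype F] [DecidableEq F]

/-- The "intercept" of the unique line through `p` with direction `d`. -/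
def cOf (d : Option F) (p : F × F) : F := d.elim p.1 fun m => p.2 - m * p.1

/-- The line with direction `d` and intercept `c`. -/
noncomputable def lineF (d : Option F) (c : F) : Finset (F × F) :=
  univ.filter fun p => cOf d p = c

lemma mem_lineF {d : Option F} {c : F} {p : F × F} : p ∈ lineF d c ↔ cOf d p = c := by
  simp [lineF]

lemma isLine_lineF (d : Option F) (c : F) : IsLine (lineF d c) := by
  cases d with
  | none => exact ⟨1, 0, c, by simp, by ext p; simp [mem_lineF, cOf]⟩
  | some m =>
      refine ⟨-m, 1, c, by simp, ?_⟩
      ext p; simp only [mem_lineF, cOf, Option.elim, mem_filter, mem_univ, true_and]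
      constructor <;> intro h <;> linear_combination h

lemma lineF_surj (ℓ : Finset (F × F)) (h : IsLine ℓ) :
    ∃ dc : Option F × F, lineF dc.1 dc.2 = ℓ := by
  obtain ⟨a, b, c, hab, rfl⟩ := h
  by_cases hb : b = 0
  · have ha : a ≠ 0 := by
      intro ha; exact hab (by simp [ha, hb])
    refine ⟨(none, c / a), ?_⟩
    ext p; simp only [mem_lineF, cOf, Option.elim, mem_filter, mem_univ, true_and, hb]
    rw [eq_div_iff ha]
    constructor <;> intro h <;> linear_combination h
  · refine ⟨(some (-a / b), c / b), ?_⟩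
    ext p; simp only [mem_lineF, cOf, Option.elim, mem_filter, mem_univ, true_and]
    rw [neg_div, neg_mul, sub_neg_eq_add, div_mul_eq_mul_div, add_comm p.2,
      div_add' _ _ _ hb, div_eq_div_iff hb hb]
    constructor
    · intro h; linear_combination mul_right_cancel₀ hb h
    · intro h; linear_combination b * h

lemma lineF_inj : Function.Injective (fun dc : Option F × F => lineF dc.1 dc.2) := by
  rintro ⟨d, c⟩ ⟨d', c'⟩ h
  simp only at h
  have H : ∀ p : F × F, cOf d p = c ↔ cOf d' p = c' := by
    intro p
    rw [← mem_lineF, ← mem_lineF, h]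
  match d, d' with
  | none, none =>
      have := (H (c, 0)).mp rfl
      simp only [cOf, Option.elim] at this
      simp [this]
  | none, some m' =>
      have h0 := (H (c, 0)).mp rfl
      have h1 := (H (c, 1)).mp rfl
      simp only [cOf, Option.elim] at h0 h1
      exfalso
      have : (0 : F) = 1 := by linear_combination h0 - h1
      exact zero_ne_one this
  | some m, none =>
      have h0 := (H (0, c)).mp (by simp [cOf])
      have h1 := (H (1, m + c)).mp (by simp [cOf])
      simp only [cOf, Option.elim] at h0 h1
      exfalso
      have : (0 : F) = 1 := by linear_combination h0 - h1
      exact zero_ne_one this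
  | some m, some m' =>
      have h0 := (H (0, c)).mp (by simp [cOf])
      have h1 := (H (1, m + c)).mp (by simp [cOf])
      simp only [cOf, Option.elim] at h0 h1
      have hm : m = m' := by linear_combination h1 - h0
      have hc : c = c' := by linear_combination h0
      simp [hm, hc]

/-- Two distinct points lie on exactly one line; a point lies on `q+1` lines (one per direction). -/
lemma count_directions (p p' : F × F) :
    (univ.filter fun d : Option F => cOf d p' = cOf d p).card
      = if p = p' then Fintype.card F + 1 else 1 := by
  by_cases hpp : p = p'
  · subst hpp
    simp [Fintype.card_option]
  · rw [if_neg hpp, Finset.card_eq_one]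
    by_cases h1 : p.1 = p'.1
    · refine ⟨none, ?_⟩
      ext d
      simp only [mem_filter, mem_univ, true_and, Finset.mem_singleton]
      cases d with
      | none => simp [cOf, h1]
      | some m =>
          simp only [cOf, Option.elim]
          constructor
          · intro h
            exfalso
            apply hpp
            have h2 : p.2 = p'.2 := by linear_combination -h + m * h1
            exact Prod.ext h1 h2
          · intro h; exact absurd h (by simp)
    · refine ⟨some ((p.2 - p'.2) / (p.1 - p'.1)), ?_⟩
      have hne : p.1 - p'.1 ≠ 0 := sub_ne_zero.mpr h1
      ext d
      simp only [mem_filter, mem_univ, true_and, Finset.mem_singleton]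
      cases d with
      | none =>
          simp only [cOf, Option.elim, Finset.mem_singleton]
          constructor
          · intro h; exact absurd h.symm h1
          · intro h; exact nomatch h
      | some m =>
          simp only [cOf, Option.elim, Option.some.injEq, Finset.mem_singleton]
          rw [eq_div_iff hne]
          constructor <;> intro h <;> linear_combination h

end Aux

section Count
variable {F : Type*} [Field F] [Fintype F] [DecidableEq F]

lemma card_line_inter (d : Option F) (c : F) (E : Finset (F × F)) :
    ((lineF d c ∩ E).card : ℝ) = ∑ p ∈ E, if cOf d p = c then (1:ℝ) else 0 := by
  have hE : lineF d c ∩ E = E.filter fun p => cOf d p = c := by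
    ext p; simp [lineF, and_comm]
  rw [hE, Finset.sum_boole]

lemma point_count (p : F × F) :
    ∑ dc : Option F × F, (if cOf dc.1 p = dc.2 then (1:ℝ) else 0)
      = (Fintype.card F : ℝ) + 1 := by
  rw [Fintype.sum_prod_type]
  simp [Finset.sum_ite_eq, Fintype.card_option]

lemma pair_count (p p' : F × F) :
    ∑ dc : Option F × F,
        ((if cOf dc.1 p = dc.2 then (1:ℝ) else 0) * (if cOf dc.1 p' = dc.2 then (1:ℝ) else 0))
      = if p = p' then (Fintype.card F : ℝ) + 1 else 1 := by
  rw [Fintype.sum_prod_type]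
  simp only [ite_mul, one_mul, zero_mul, Finset.sum_ite_eq, Finset.mem_univ, if_true]
  rw [Finset.sum_boole, count_directions p p']
  by_cases hpp : p = p' <;> simp [hpp]

end Count

theorem variance_of_incidence_function
    {F : Type*} [Field F] [Fintype F] [DecidableEq F] (q : ℕ) (hq : Fintype.card F = q)
    (E : Finset (F × F)) :
    ∑ ℓ ∈ Finset.univ.filter (fun ℓ : Finset (F × F) => IsLine ℓ),
        (((ℓ ∩ E).card : ℝ) - (E.card : ℝ) / (q : ℝ)) ^ 2
      ≤ (q : ℝ) * (E.card : ℝ) := by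
  have hq1 : 1 < q := hq ▸ Fintype.one_lt_card
  have hq0 : (0:ℝ) < (q:ℝ) := by exact_mod_cast Nat.lt_of_lt_of_le Nat.zero_lt_one hq1.le
  set t : ℝ := (E.card : ℝ) / (q : ℝ) with ht
  set e : ℝ := (E.card : ℝ) with he
  -- re-index the sum by (direction, intercept)
  have hbij : ∑ ℓ ∈ Finset.univ.filter (fun ℓ : Finset (F × F) => IsLine ℓ),
        (((ℓ ∩ E).card : ℝ) - t) ^ 2
      = ∑ dc : Option F × F, (((lineF dc.1 dc.2 ∩ E).card : ℝ) - t) ^ 2 := by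
    refine (Finset.sum_bij (fun (dc : Option F × F) (_ : dc ∈ univ) => lineF dc.1 dc.2)
      ?_ ?_ ?_ ?_).symm
    · intro dc _; simp only [Finset.mem_filter, Finset.mem_univ, true_and]
      exact isLine_lineF dc.1 dc.2
    · intro a _ b _ h; exact lineF_inj h
    · intro ℓ hℓ
      obtain ⟨dc, hdc⟩ := lineF_surj ℓ (by simpa using hℓ)
      exact ⟨dc, Finset.mem_univ _, hdc⟩
    · intro dc _; rfl
  rw [hbij]
  -- first moment
  have hsum1 : ∑ dc : Option F × F, ((lineF dc.1 dc.2 ∩ E).card : ℝ) = ((q:ℝ)+1) * e := by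
    simp only [card_line_inter]
    rw [Finset.sum_comm]
    rw [Finset.sum_congr rfl fun p _ => point_count p, Finset.sum_const, nsmul_eq_mul, hq, he]
    ring
  -- second moment
  have hsum2 : ∑ dc : Option F × F, ((lineF dc.1 dc.2 ∩ E).card : ℝ) ^ 2
      = e * e + (q:ℝ) * e := by
    simp only [card_line_inter]
    calc ∑ dc : Option F × F, (∑ p ∈ E, if cOf dc.1 p = dc.2 then (1:ℝ) else 0) ^ 2
        = ∑ dc : Option F × F, ∑ p ∈ E, ∑ p' ∈ E,
            ((if cOf dc.1 p = dc.2 then (1:ℝ) else 0) * (if cOf dc.1 p' = dc.2 then (1:ℝ) else 0)) := by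
          refine Finset.sum_congr rfl fun dc _ => ?_
          rw [sq, Finset.sum_mul_sum]
      _ = ∑ p ∈ E, ∑ p' ∈ E, ∑ dc : Option F × F,
            ((if cOf dc.1 p = dc.2 then (1:ℝ) else 0) * (if cOf dc.1 p' = dc.2 then (1:ℝ) else 0)) := by
          rw [Finset.sum_comm]
          exact Finset.sum_congr rfl fun p _ => Finset.sum_comm
      _ = ∑ p ∈ E, ∑ p' ∈ E, (if p = p' then (q:ℝ)+1 else 1) := by
          refine Finset.sum_congr rfl fun p _ => Finset.sum_congr rfl fun p' _ => ?_
          rw [pair_count, hq]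
      _ = ∑ p ∈ E, ∑ p' ∈ E, ((1:ℝ) + if p = p' then (q:ℝ) else 0) := by
          refine Finset.sum_congr rfl fun p _ => Finset.sum_congr rfl fun p' _ => ?_
          split_ifs <;> ring
      _ = ∑ p ∈ E, (e + (q:ℝ)) := by
          refine Finset.sum_congr rfl fun p hp => ?_
          rw [Finset.sum_add_distrib, Finset.sum_const, nsmul_eq_mul, mul_one,
            Finset.sum_ite_eq E p (fun _ => (q:ℝ)), if_pos hp, he]
      _ = e * e + (q:ℝ) * e := by
          rw [Finset.sum_const, nsmul_eq_mul, he]; ring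
  -- expand the square
  have hcard : ((Fintype.card (Option F × F)) : ℝ) = ((q:ℝ)+1) * (q:ℝ) := by
    rw [Fintype.card_prod, Fintype.card_option, hq]; push_cast; ring
  have key : ∑ dc : Option F × F, (((lineF dc.1 dc.2 ∩ E).card : ℝ) - t) ^ 2
      = (∑ dc : Option F × F, ((lineF dc.1 dc.2 ∩ E).card : ℝ) ^ 2)
        - (∑ dc : Option F × F, ((lineF dc.1 dc.2 ∩ E).card : ℝ)) * (2 * t)
        + ((q:ℝ)+1) * (q:ℝ) * t ^ 2 := by
    calc ∑ dc : Option F × F, (((lineF dc.1 dc.2 ∩ E).card : ℝ) - t) ^ 2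
        = ∑ dc : Option F × F, (((lineF dc.1 dc.2 ∩ E).card : ℝ) ^ 2
            - ((lineF dc.1 dc.2 ∩ E).card : ℝ) * (2 * t) + t ^ 2) := by
          exact Finset.sum_congr rfl fun dc _ => by ring
      _ = _ := by
          rw [Finset.sum_add_distrib, Finset.sum_sub_distrib, ← Finset.sum_mul,
            Finset.sum_const, nsmul_eq_mul, Finset.card_univ, hcard]
  rw [key, hsum1, hsum2]
  have heq : e * e + (q:ℝ) * e - ((q:ℝ)+1) * e * (2 * t) + ((q:ℝ)+1) * (q:ℝ) * t ^ 2
      = (q:ℝ) * e - e ^ 2 / (q:ℝ) := by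
    rw [ht, he]
    field_simp
    ring
  rw [heq]
  have hpos : 0 ≤ e ^ 2 / (q:ℝ) := by positivity
  linarith
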